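/- With f: S₄ → {±1} as above and ξ(g₁,g₂) := f(g₂)^{ε(g₁)}, write gᵢ = σᵢhᵢ with σᵢ ∈ S₃, hᵢ ∈ H. Then the coboundary satisfies dξ(g₁,g₂,g₃) = (f(g₂σ₃) f(g₂))^{ε(g₁)} (-1)^{ε(g₁)ε(g₂)ε(h₃)}. In particular, dξ(g₁,g₂,h) = (-1)^{ε(g₁)ε(g₂)ε(h)} for all g₁,g₂ ∈ S₄ and h ∈ H. -/

import Mathlib

open Equiv

abbrev S4 := Equiv.Perm (Fin 4)

/-- the 4-cycle (1234), zero-indexed as (0 1 2 3) -/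
def fourCycle : S4 := Equiv.swap 0 1 * Equiv.swap 1 2 * Equiv.swap 2 3

/-- H = ⟨(1234)⟩ ≤ S₄. -/
def Hsub : Subgroup S4 := Subgroup.zpowers fourCycle

/-- The copy of S₃ inside S₄ as the stabilizer of the last point. -/
def S3sub : Subgroup S4 := MulAction.stabilizer S4 (3 : Fin 4)

/-- ε(g) ∈ {0,1} defined by sgn(g) = (-1)^{ε(g)}. -/
def eps (g : S4) : ℕ := if Equiv.Perm.sign g = 1 then 0 else 1

/-- f₀((1234)^z) = 1 for z = 0,1 and -1 for z = 2,3, as a function on H. -/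
def f0 (g : S4) : ℤ := if g = 1 ∨ g = fourCycle then 1 else -1

/-- the 2-cochain ξ(g₁,g₂) = f(g₂)^{ε(g₁)} -/
def xi (f : S4 → ℤ) (g₁ g₂ : S4) : ℂ := ((f g₂ : ℤ) : ℂ) ^ eps g₁

/-- the coboundary dξ(g₁,g₂,g₃) = ξ(g₂,g₃) ξ(g₁g₂,g₃)⁻¹ ξ(g₁,g₂g₃) ξ(g₁,g₂)⁻¹ -/
noncomputable def dxi (f : S4 → ℤ) (g₁ g₂ g₃ : S4) : ℂ :=
  xi f g₂ g₃ * (xi f (g₁ * g₂) g₃)⁻¹ * xi f g₁ (g₂ * g₃) * (xi f g₁ g₂)⁻¹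

/-- dξ(g₁,g₂,g₃) = (f(g₂σ₃)f(g₂))^{ε(g₁)} (-1)^{ε(g₁)ε(g₂)ε(h₃)} where
g₃ = σ₃h₃; in particular dξ(g₁,g₂,h) = (-1)^{ε(g₁)ε(g₂)ε(h)} for h ∈ H. -/
lemma f0_mul : ∀ a b : Fin 4,
    f0 (fourCycle ^ (a:ℕ) * fourCycle ^ (b:ℕ)) =
      f0 (fourCycle ^ (a:ℕ)) * f0 (fourCycle ^ (b:ℕ)) *
        (-1) ^ (eps (fourCycle ^ (a:ℕ)) * eps (fourCycle ^ (b:ℕ))) := by decide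
lemma eps_mul (x y : S4) : eps (x*y) % 2 = (eps x + eps y) % 2 := by
  unfold eps
  rw [map_mul]
  rcases Int.units_eq_one_or (Equiv.Perm.sign x) with h1 | h1 <;>
    rcases Int.units_eq_one_or (Equiv.Perm.sign y) with h2 | h2 <;>
      rw [h1, h2] <;> decide
lemma eps_inv (x : S4) : eps x⁻¹ = eps x := by
  unfold eps
  rw [map_inv]
  rcases Int.units_eq_one_or (Equiv.Perm.sign x) with h1 | h1 <;> rw [h1] <;> decide

lemma facto (g : S4) : ∃ k : Fin 4, g * (fourCycle ^ (k:ℕ))⁻¹ ∈ S3sub := by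
  have h : ∀ g : S4, ∃ k : Fin 4, (g * (fourCycle ^ (k:ℕ))⁻¹) 3 = 3 := by decide
  obtain ⟨k, hk⟩ := h g
  exact ⟨k, by simpa [S3sub, MulAction.mem_stabilizer_iff, Equiv.Perm.smul_def] using hk⟩

lemma Hmem {h : S4} (hh : h ∈ Hsub) : ∃ k : Fin 4, h = fourCycle ^ (k:ℕ) := by
  obtain ⟨z, hz⟩ := Subgroup.mem_zpowers_iff.mp hh
  have c4 : (fourCycle : S4) ^ (4:ℤ) = 1 := by
    rw [show (4:ℤ) = ((4:ℕ):ℤ) from rfl, zpow_natCast]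
    decide
  have hz4 : fourCycle ^ (z % 4) = h := by
    rw [← hz]
    conv_rhs => rw [← Int.emod_add_mul_ediv z 4]
    rw [zpow_add, zpow_mul, c4, one_zpow, mul_one]
  have h0 : 0 ≤ z % 4 := Int.emod_nonneg z (by norm_num)
  have h4 : z % 4 < 4 := Int.emod_lt_of_pos z (by norm_num)
  refine ⟨⟨(z % 4).toNat, by omega⟩, ?_⟩
  rw [← hz4]
  simp only [Fin.val_mk]
  rw [← zpow_natCast, Int.toNat_of_nonneg h0]
lemma key_pow (m n : ℕ) (h : m % 2 = n % 2) : (-1:ℂ)^m = (-1)^n := by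
  conv_lhs => rw [← Nat.div_add_mod m 2]
  conv_rhs => rw [← Nat.div_add_mod n 2]
  simp [pow_add, pow_mul, neg_one_sq, h]

lemma f0_pm (g : S4) : f0 g = 1 ∨ f0 g = -1 := by unfold f0; split <;> simp

lemma epm2 {t : ℤ} (h : t = 1 ∨ t = -1) : ∃ n : ℕ, t = (-1)^n := by
  rcases h with h | h
  · exact ⟨0, by simp [h]⟩
  · exact ⟨1, by simp [h]⟩

lemma neg_one_pow_pm (n : ℕ) : ((-1:ℤ))^n = 1 ∨ ((-1:ℤ))^n = -1 := by
  rcases Nat.even_or_odd n with h | h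
  · exact Or.inl h.neg_one_pow
  · exact Or.inr h.neg_one_pow

lemma cast2 {a b : ℕ} (h : a % 2 = b % 2) : ((a : ZMod 2)) = b :=
  (ZMod.natCast_eq_natCast_iff' _ _ _).mpr h

theorem dxi_formula (f : S4 → ℤ)
    (hdef : ∀ σ ∈ S3sub, ∀ h ∈ Hsub, f (σ * h) = f0 h * (-1) ^ (eps σ * eps h)) :
    (∀ g₁ g₂ : S4, ∀ σ₃ ∈ S3sub, ∀ h₃ ∈ Hsub,
      dxi f g₁ g₂ (σ₃ * h₃) =
        ((f (g₂ * σ₃) * f g₂ : ℤ) : ℂ) ^ eps g₁ * (-1 : ℂ) ^ (eps g₁ * eps g₂ * eps h₃)) ∧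
    (∀ g₁ g₂ : S4, ∀ h ∈ Hsub,
      dxi f g₁ g₂ h = (-1 : ℂ) ^ (eps g₁ * eps g₂ * eps h)) := by
  have fourMem : fourCycle ∈ Hsub := Subgroup.mem_zpowers _
  have hfpm : ∀ g : S4, f g = 1 ∨ f g = -1 := by
    intro g
    obtain ⟨k, hk⟩ := facto g
    have hg : g = (g * (fourCycle ^ (k:ℕ))⁻¹) * fourCycle ^ (k:ℕ) := by group
    rw [hg, hdef _ hk _ (pow_mem fourMem _)]
    rcases f0_pm (fourCycle ^ (k:ℕ)) with h | h <;> rw [h] <;>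
      rcases neg_one_pow_pm (eps (g * (fourCycle^(k:ℕ))⁻¹) * eps (fourCycle^(k:ℕ))) with he | he <;>
        rw [he] <;> norm_num
  have main : ∀ g₁ g₂ : S4, ∀ σ₃ ∈ S3sub, ∀ h₃ ∈ Hsub,
      dxi f g₁ g₂ (σ₃ * h₃) =
        ((f (g₂ * σ₃) * f g₂ : ℤ) : ℂ) ^ eps g₁ * (-1 : ℂ) ^ (eps g₁ * eps g₂ * eps h₃) := by
    intro g₁ g₂ σ₃ hσ₃ h₃ hh₃
    obtain ⟨m, rfl⟩ := Hmem hh₃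
    obtain ⟨k, hkmem⟩ := facto (g₂ * σ₃)
    set σ' : S4 := (g₂ * σ₃) * (fourCycle ^ (k:ℕ))⁻¹ with hσ'def
    have hfac : g₂ * σ₃ = σ' * fourCycle ^ (k:ℕ) := by rw [hσ'def]; group
    have hmk : fourCycle ^ (k:ℕ) ∈ Hsub := pow_mem fourMem _
    have hmm : fourCycle ^ (m:ℕ) ∈ Hsub := pow_mem fourMem _
    have hmkm : fourCycle ^ (k:ℕ) * fourCycle ^ (m:ℕ) ∈ Hsub := mul_mem hmk hmm
    have hv3 : f (σ₃ * fourCycle ^ (m:ℕ)) =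
        f0 (fourCycle ^ (m:ℕ)) * (-1)^(eps σ₃ * eps (fourCycle ^ (m:ℕ))) := hdef σ₃ hσ₃ _ hmm
    have hv2 : f (g₂ * σ₃) =
        f0 (fourCycle ^ (k:ℕ)) * (-1)^(eps σ' * eps (fourCycle ^ (k:ℕ))) := by
      rw [hfac]; exact hdef σ' hkmem _ hmk
    have hv23 : f (g₂ * (σ₃ * fourCycle ^ (m:ℕ))) =
        f0 (fourCycle ^ (k:ℕ) * fourCycle ^ (m:ℕ)) *
          (-1)^(eps σ' * eps (fourCycle ^ (k:ℕ) * fourCycle ^ (m:ℕ))) := by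
      rw [← mul_assoc, hfac, mul_assoc]; exact hdef σ' hkmem _ hmkm
    obtain ⟨eu, hu⟩ := epm2 (f0_pm (fourCycle ^ (k:ℕ)))
    obtain ⟨ev, hvv⟩ := epm2 (f0_pm (fourCycle ^ (m:ℕ)))
    obtain ⟨eb, hbb⟩ := epm2 (hfpm g₂)
    have hc : eps (g₁*g₂) % 2 = (eps g₁ + eps g₂) % 2 := eps_mul _ _
    have hr : eps (fourCycle ^ (k:ℕ) * fourCycle ^ (m:ℕ)) % 2 =
        (eps (fourCycle ^ (k:ℕ)) + eps (fourCycle ^ (m:ℕ))) % 2 := eps_mul _ _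
    have hb : eps g₂ % 2 = (eps σ' + eps (fourCycle ^ (k:ℕ)) + eps σ₃) % 2 := by
      have hg2 : g₂ = σ' * fourCycle ^ (k:ℕ) * σ₃⁻¹ := by rw [← hfac]; group
      rw [hg2]
      have h1 := eps_mul (σ' * fourCycle ^ (k:ℕ)) σ₃⁻¹
      have h2 := eps_mul σ' (fourCycle ^ (k:ℕ))
      rw [eps_inv] at h1
      omega
    set a := eps g₁
    set b := eps g₂
    set cc := eps (g₁ * g₂)
    set s := eps σ₃
    set s' := eps σ'
    set p := eps (fourCycle ^ (k:ℕ))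
    set q := eps (fourCycle ^ (m:ℕ))
    set r := eps (fourCycle ^ (k:ℕ) * fourCycle ^ (m:ℕ))
    have hpar : ((ev + s*q)*b + (ev + s*q)*cc + (eu + ev + p*q + s'*r)*a + eb*a) % 2
        = ((eu + s'*p + eb)*a + a*b*q) % 2 := by
      apply (ZMod.natCast_eq_natCast_iff' _ _ 2).mp
      have hc2 := cast2 hc
      have hr2 := cast2 hr
      have hb2 := cast2 hb
      push_cast at hc2 hr2 hb2 ⊢
      rw [hc2, hr2, hb2]
      clear hc2 hr2 hb2 hc hr hb
      generalize (a : ZMod 2) = A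
      generalize (s : ZMod 2) = S
      generalize (s' : ZMod 2) = S'
      generalize (p : ZMod 2) = P
      generalize (q : ZMod 2) = Q
      generalize (eu : ZMod 2) = EU
      generalize (ev : ZMod 2) = EV
      generalize (eb : ZMod 2) = EB
      revert A S S' P Q EU EV EB
      decide
    unfold dxi xi
    rw [hv3, hv23, hv2, f0_mul k m, hu, hvv, hbb]
    push_cast
    simp only [← inv_pow, inv_neg, inv_one]
    trans ((-1:ℂ)^((ev + s*q)*b + (ev + s*q)*cc + (eu + ev + p*q + s'*r)*a + eb*a))
    · simp only [a, b, cc, p, q, mul_inv, ← inv_pow, inv_neg_one]; ring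
    rw [key_pow _ _ hpar]
    ring
  refine ⟨main, ?_⟩
  intro g₁ g₂ h hh
  have hm := main g₁ g₂ 1 (one_mem _) h hh
  rw [one_mul, mul_one] at hm
  rw [hm]
  rcases hfpm g₂ with h2 | h2 <;> rw [h2] <;> norm_num
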